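/- Let M be a module over ℤ[t^{±1}] and let P ⊆ M be a submodule such that either (P is isomorphic to ℤ[t^{±1}]/(2t−1) and M/P is isomorphic to ℤ[t^{±1}]/(t−2)) or (P is isomorphic to ℤ[t^{±1}]/(t−2) and M/P is isomorphic to ℤ[t^{±1}]/(2t−1)), all isomorphisms being of ℤ[t^{±1}]-modules. Then M is isomorphic as a ℤ[t^{±1}]-module either to ℤ[t^{±1}]/(t−2) ⊕ ℤ[t^{±1}]/(2t−1) or to ℤ[t^{±1}]/((t−2)(2t−1)). -/

import Mathlib

open LaurentPolynomial

local notation "R" => LaurentPolynomial ℤ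

noncomputable def tL : LaurentPolynomial ℤ := LaurentPolynomial.T 1

namespace MiddleAux

/-- The key arithmetic input: modulo the ideal `(t-2, 2t-1)`, every Laurent
polynomial is congruent to `0`, `1`, or `-1` (the quotient is `ℤ/3`). -/
lemma T_cong (I : Ideal R) (h32 : tL - 2 ∈ I) (h21 : 2 * tL - 1 ∈ I) :
    ∀ n : ℤ, ((T n : R) - 1 ∈ I) ∨ ((T n : R) + 1 ∈ I) := by
  have h3 : (3 : R) ∈ I := by
    have : (3 : R) = (2 * tL - 1) - 2 * (tL - 2) := by ring
    rw [this]
    exact I.sub_mem h21 (I.mul_mem_left _ h32)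
  have ht : tL + 1 ∈ I := by
    have : tL + 1 = (tL - 2) + 3 := by ring
    rw [this]; exact I.add_mem h32 h3
  have htinv : (T (-1) : R) + 1 ∈ I := by
    have : (T (-1) : R) + 1 = T (-1) * (tL + 1) := by
      have h1 : (T (-1) : R) * T 1 = 1 := by rw [← T_add]; norm_num
      unfold tL
      rw [mul_add, h1, mul_one]; ring
    rw [this]; exact I.mul_mem_left _ ht
  intro n
  induction n using Int.induction_on with
  | zero => left; simp [T_zero]
  | succ k ih =>
    have hT : (T ((k : ℤ) + 1) : R) = T k * tL := by rw [T_add]; rfl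
    rcases ih with ih | ih
    · right
      have : (T ((k : ℤ) + 1) : R) + 1 = (T k - 1) * tL + (tL + 1) := by rw [hT]; ring
      rw [this]; exact I.add_mem (I.mul_mem_right _ ih) ht
    · left
      have : (T ((k : ℤ) + 1) : R) - 1 = (T k + 1) * tL - (tL + 1) := by rw [hT]; ring
      rw [this]; exact I.sub_mem (I.mul_mem_right _ ih) ht
  | pred k ih =>
    have hT : (T (-(k : ℤ) - 1) : R) = T (-k) * T (-1) := by
      rw [show (-(k : ℤ) - 1) = -(k : ℤ) + -1 from by ring, T_add]
    rcases ih with ih | ih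
    · right
      have : (T (-(k : ℤ) - 1) : R) + 1 = (T (-k) - 1) * T (-1) + (T (-1) + 1) := by
        rw [hT]; ring
      rw [this]; exact I.add_mem (I.mul_mem_right _ ih) htinv
    · left
      have : (T (-(k : ℤ) - 1) : R) - 1 = (T (-k) + 1) * T (-1) - (T (-1) + 1) := by
        rw [hT]; ring
      rw [this]; exact I.sub_mem (I.mul_mem_right _ ih) htinv

lemma cong_int (I : Ideal R) (h32 : tL - 2 ∈ I) (h21 : 2 * tL - 1 ∈ I) (c : R) :
    ∃ k : ℤ, c - (k : R) ∈ I := by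
  induction c using LaurentPolynomial.induction_on' with
  | add p q hp hq =>
    obtain ⟨k, hk⟩ := hp
    obtain ⟨l, hl⟩ := hq
    refine ⟨k + l, ?_⟩
    have : p + q - ((k + l : ℤ) : R) = (p - (k : R)) + (q - (l : R)) := by
      push_cast; ring
    rw [this]; exact I.add_mem hk hl
  | C_mul_T n a =>
    rcases T_cong I h32 h21 n with hn | hn
    · refine ⟨a, ?_⟩
      have hC : (C a : R) = (a : R) := by
        exact_mod_cast eq_intCast (C : ℤ →+* R) a
      have : (C a : R) * T n - (a : R) = (a : R) * ((T n : R) - 1) := by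
        rw [hC]; ring
      rw [this]; exact I.mul_mem_left _ hn
    · refine ⟨-a, ?_⟩
      have hC : (C a : R) = (a : R) := by
        exact_mod_cast eq_intCast (C : ℤ →+* R) a
      have : (C a : R) * T n - ((-a : ℤ) : R) = (a : R) * ((T n : R) + 1) := by
        rw [hC]; push_cast; ring
      rw [this]; exact I.mul_mem_left _ hn

lemma key_trichotomy (I : Ideal R) (h32 : tL - 2 ∈ I) (h21 : 2 * tL - 1 ∈ I) (c : R) :
    c ∈ I ∨ c - 1 ∈ I ∨ c + 1 ∈ I := by
  have h3 : (3 : R) ∈ I := by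
    have : (3 : R) = (2 * tL - 1) - 2 * (tL - 2) := by ring
    rw [this]
    exact I.sub_mem h21 (I.mul_mem_left _ h32)
  obtain ⟨k, hk⟩ := cong_int I h32 h21 c
  have hmod : k % 3 = 0 ∨ k % 3 = 1 ∨ k % 3 = 2 := by omega
  rcases hmod with hm | hm | hm
  · left
    obtain ⟨j, hj⟩ : (3 : ℤ) ∣ k := by omega
    have : c = (c - (k : R)) + (j : R) * 3 := by rw [hj]; push_cast; ring
    rw [this]; exact I.add_mem hk (I.mul_mem_left _ h3)
  · right; left
    obtain ⟨j, hj⟩ : (3 : ℤ) ∣ (k - 1) := by omega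
    have : c - 1 = (c - (k : R)) + (j : R) * 3 := by
      have : (k : R) = (1 : R) + (j : R) * 3 := by
        have : k = 1 + j * 3 := by omega
        rw [this]; push_cast; ring
      rw [this]; ring
    rw [this]; exact I.add_mem hk (I.mul_mem_left _ h3)
  · right; right
    obtain ⟨j, hj⟩ : (3 : ℤ) ∣ (k + 1) := by omega
    have : c + 1 = (c - (k : R)) + (j : R) * 3 := by
      have : (k : R) = (-1 : R) + (j : R) * 3 := by
        have : k = -1 + j * 3 := by omega
        rw [this]; push_cast; ring
      rw [this]; ring
    rw [this]; exact I.add_mem hk (I.mul_mem_left _ h3)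

set_option maxHeartbeats 1000000 in
/-- The abstract extension classification, given the arithmetic trichotomy. -/
lemma classify (a b : R) (M : Type*) [AddCommGroup M] [Module R M]
    (P : Submodule R M)
    (e : P ≃ₗ[R] (R ⧸ (Ideal.span {a} : Ideal R)))
    (f : (M ⧸ P) ≃ₗ[R] (R ⧸ (Ideal.span {b} : Ideal R)))
    (key : ∀ c : R, c ∈ Ideal.span {a, b} ∨ c - 1 ∈ Ideal.span {a, b} ∨
      c + 1 ∈ Ideal.span {a, b}) :
    Nonempty (M ≃ₗ[R]
        ((R ⧸ (Ideal.span {a} : Ideal R)) × (R ⧸ (Ideal.span {b} : Ideal R)))) ∨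
    Nonempty (M ≃ₗ[R] (R ⧸ (Ideal.span {a * b} : Ideal R))) := by
  classical
  -- the generator of P
  set pS : P := e.symm (Submodule.Quotient.mk 1) with hpS
  set p : M := (pS : M) with hp
  have hsmul : ∀ r : R, r • pS = e.symm (Submodule.Quotient.mk r) := by
    intro r
    rw [← e.symm.map_smul]
    congr 1
    rw [← Submodule.Quotient.mk_smul]
    congr 1
    simp [smul_eq_mul]
  have hgen : ∀ q : P, ∃ r : R, (q : M) = r • p := by
    intro q
    obtain ⟨r, hr⟩ := Submodule.Quotient.mk_surjective _ (e q)
    refine ⟨r, ?_⟩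
    have : q = r • pS := by
      rw [hsmul, hr, LinearEquiv.symm_apply_apply]
    rw [this, hp]
    rfl
  have hann : ∀ r : R, r • p = 0 ↔ r ∈ Ideal.span ({a} : Set R) := by
    intro r
    have h1 : r • p = ((r • pS : P) : M) := rfl
    rw [h1]
    rw [show ((r • pS : P) : M) = 0 ↔ r • pS = 0 from
      ⟨fun h => Subtype.ext h, fun h => by rw [h]; rfl⟩]
    rw [hsmul]
    rw [LinearEquiv.map_eq_zero_iff]
    exact Submodule.Quotient.mk_eq_zero _
  have hap : a • p = 0 := (hann a).2 (Ideal.subset_span rfl)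
  -- choose a lift m of the generator of M ⧸ P
  obtain ⟨m, hm⟩ := Submodule.Quotient.mk_surjective P (f.symm (Submodule.Quotient.mk 1))
  have hmkr : ∀ r : R, Submodule.Quotient.mk (p := P) (r • m) =
      f.symm (Submodule.Quotient.mk r) := by
    intro r
    rw [Submodule.Quotient.mk_smul, hm, ← f.symm.map_smul]
    congr 1
    rw [← Submodule.Quotient.mk_smul]
    congr 1
    simp [smul_eq_mul]
  have hbmP : b • m ∈ P := by
    rw [← Submodule.Quotient.mk_eq_zero P, hmkr b]
    rw [LinearEquiv.map_eq_zero_iff]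
    rw [Submodule.Quotient.mk_eq_zero]
    exact Ideal.subset_span rfl
  obtain ⟨c, hc⟩ := hgen ⟨b • m, hbmP⟩
  simp only [Submodule.coe_mk] at hc
  -- hc : b • m = c • p
  rcases key c with hcase | hcase
  · -- split case: M ≅ R/(a) × R/(b)
    left
    obtain ⟨x, y, hxy⟩ := Ideal.mem_span_pair.1 hcase
    set m' : M := m - y • p with hm'
    have hbm' : b • m' = 0 := by
      have : b • m' = b • m - (y * b) • p := by
        rw [hm', smul_sub, smul_smul, mul_comm b y]
      rw [this, hc, ← hxy]
      have : (x * a + y * b) • p - (y * b) • p = x • (a • p) := by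
        rw [add_smul, smul_smul]; ring_nf; abel
      rw [this, hap, smul_zero]
    -- the section  R/(b) → M
    have hker : Ideal.span ({b} : Set R) ≤ LinearMap.ker (LinearMap.toSpanSingleton R M m') := by
      rw [Ideal.span_le]
      rintro z rfl
      simpa [LinearMap.mem_ker, LinearMap.toSpanSingleton_apply] using hbm'
    set g : (R ⧸ (Ideal.span {b} : Ideal R)) →ₗ[R] M :=
      Submodule.liftQ _ (LinearMap.toSpanSingleton R M m') hker with hg
    have hgmk : ∀ r : R, g (Submodule.Quotient.mk r) = r • m' := by
      intro r
      rw [hg]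
      rfl
    have hmkg : ∀ v : R ⧸ (Ideal.span {b} : Ideal R),
        Submodule.Quotient.mk (p := P) (g v) = f.symm v := by
      intro v
      obtain ⟨r, rfl⟩ := Submodule.Quotient.mk_surjective _ v
      rw [hgmk]
      have : Submodule.Quotient.mk (p := P) (r • m') =
          Submodule.Quotient.mk (p := P) (r • m) := by
        rw [hm', smul_sub]
        have : r • (y • p) ∈ P := P.smul_mem _ (P.smul_mem _ pS.2)
        rw [Submodule.Quotient.mk_sub, (Submodule.Quotient.mk_eq_zero P).2 this, sub_zero]
      rw [this, hmkr]
    set Φ : ((R ⧸ (Ideal.span {a} : Ideal R)) × (R ⧸ (Ideal.span {b} : Ideal R))) →ₗ[R] M :=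
      (P.subtype.comp (e.symm : (R ⧸ (Ideal.span {a} : Ideal R)) →ₗ[R] P)).coprod g with hΦ
    have hΦ_apply : ∀ u v, Φ (u, v) = ((e.symm u : P) : M) + g v := fun u v => rfl
    have hinj : Function.Injective Φ := by
      rw [injective_iff_map_eq_zero]
      rintro ⟨u, v⟩ huv
      rw [hΦ_apply] at huv
      have hv : f.symm v = 0 := by
        have h1 : Submodule.Quotient.mk (p := P) (((e.symm u : P) : M) + g v) = 0 := by
          rw [huv]; rfl
        rw [Submodule.Quotient.mk_add, (Submodule.Quotient.mk_eq_zero P).2 (e.symm u).2,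
          zero_add, hmkg] at h1
        exact h1
      have hv0 : v = 0 := by rwa [LinearEquiv.map_eq_zero_iff] at hv
      subst hv0
      rw [map_zero, add_zero] at huv
      have : (e.symm u : P) = 0 := Subtype.ext huv
      have : u = 0 := by rwa [LinearEquiv.map_eq_zero_iff] at this
      simp [this]
    have hsurj : Function.Surjective Φ := by
      intro x
      set v := f (Submodule.Quotient.mk (p := P) x) with hv
      have hmem : x - g v ∈ P := by
        rw [← Submodule.Quotient.mk_eq_zero P, Submodule.Quotient.mk_sub, hmkg, hv,
          LinearEquiv.symm_apply_apply, sub_self]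
      refine ⟨(e ⟨x - g v, hmem⟩, v), ?_⟩
      rw [hΦ_apply, LinearEquiv.symm_apply_apply]
      simp
    exact ⟨(LinearEquiv.ofBijective Φ ⟨hinj, hsurj⟩).symm⟩
  · -- nonsplit case: M ≅ R/(ab)
    right
    have hε : ∃ ε : R, ε * ε = 1 ∧ c - ε ∈ Ideal.span ({a, b} : Set R) := by
      rcases hcase with h1 | h1
      · exact ⟨1, by ring, h1⟩
      · exact ⟨-1, by ring, by simpa [sub_neg_eq_add] using h1⟩
    obtain ⟨ε, hε2, hεI⟩ := hε
    obtain ⟨x, y, hxy⟩ := Ideal.mem_span_pair.1 hεI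
    set m' : M := m - y • p with hm'
    have hbm' : b • m' = ε • p := by
      have h1 : b • m' = b • m - (y * b) • p := by
        rw [hm', smul_sub, smul_smul, mul_comm b y]
      rw [h1, hc]
      have h2 : c = ε + (x * a + y * b) := by rw [hxy]; ring
      rw [h2]
      have : (ε + (x * a + y * b)) • p - (y * b) • p = ε • p + x • (a • p) := by
        rw [add_smul, add_smul, smul_smul]; abel
      rw [this, hap, smul_zero, add_zero]
    have hmkm' : ∀ r : R, Submodule.Quotient.mk (p := P) (r • m') =
        f.symm (Submodule.Quotient.mk r) := by
      intro r
      have : Submodule.Quotient.mk (p := P) (r • m') =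
          Submodule.Quotient.mk (p := P) (r • m) := by
        rw [hm', smul_sub]
        have : r • (y • p) ∈ P := P.smul_mem _ (P.smul_mem _ pS.2)
        rw [Submodule.Quotient.mk_sub, (Submodule.Quotient.mk_eq_zero P).2 this, sub_zero]
      rw [this, hmkr]
    set ψ : R →ₗ[R] M := LinearMap.toSpanSingleton R M m' with hψ
    have hψ_apply : ∀ r : R, ψ r = r • m' := fun r => rfl
    have hsurj : Function.Surjective ψ := by
      intro z
      obtain ⟨r, hr⟩ := Submodule.Quotient.mk_surjective _ (f (Submodule.Quotient.mk (p := P) z))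
      have hmem : z - r • m' ∈ P := by
        rw [← Submodule.Quotient.mk_eq_zero P, Submodule.Quotient.mk_sub, hmkm', hr,
          LinearEquiv.symm_apply_apply, sub_self]
      obtain ⟨s, hs⟩ := hgen ⟨z - r • m', hmem⟩
      simp only [Submodule.coe_mk] at hs
      refine ⟨r + s * (ε * b), ?_⟩
      rw [hψ_apply, add_smul]
      have : (s * (ε * b)) • m' = s • (ε • (b • m')) := by
        rw [smul_smul, smul_smul, mul_assoc]
      rw [this, hbm']
      have : ε • ε • p = p := by rw [smul_smul, hε2, one_smul]
      rw [this, ← hs]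
      abel
    have hker : LinearMap.ker ψ = Ideal.span ({a * b} : Set R) := by
      ext r
      constructor
      · intro hr
        rw [LinearMap.mem_ker, hψ_apply] at hr
        have h1 : f.symm (Submodule.Quotient.mk r) = 0 := by
          rw [← hmkm', hr, Submodule.Quotient.mk_eq_zero]
          exact P.zero_mem
        rw [LinearEquiv.map_eq_zero_iff, Submodule.Quotient.mk_eq_zero] at h1
        obtain ⟨s, hs⟩ := Ideal.mem_span_singleton'.1 h1
        -- r = s * b
        have h2 : (s * ε) • p = 0 := by
          have : (s * ε) • p = s • (ε • p) := by rw [smul_smul]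
          rw [this, ← hbm']
          have : s • (b • m') = r • m' := by rw [smul_smul, hs]
          rw [this, hr]
        rw [hann] at h2
        obtain ⟨u, hu⟩ := Ideal.mem_span_singleton'.1 h2
        -- u * a = s * ε
        rw [Ideal.mem_span_singleton']
        refine ⟨ε * u, ?_⟩
        have hs' : s = ε * (u * a) := by
          rw [hu]
          have : ε * (s * ε) = s * (ε * ε) := by ring
          rw [this, hε2, mul_one]
        rw [← hs, hs']
        ring
      · intro hr
        obtain ⟨s, hs⟩ := Ideal.mem_span_singleton'.1 hr
        rw [LinearMap.mem_ker, hψ_apply, ← hs]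
        have : (s * (a * b)) • m' = (s * a) • (b • m') := by
          rw [smul_smul]; ring_nf
        rw [this, hbm']
        have : (s * a) • ε • p = (s * ε) • (a • p) := by
          rw [smul_smul, smul_smul]; ring_nf
        rw [this, hap, smul_zero]
    exact ⟨((Submodule.quotEquivOfEq _ _ hker.symm).trans
      (ψ.quotKerEquivOfSurjective hsurj)).symm⟩

end MiddleAux

theorem middle_module_of_extension_classification
    (M : Type*) [AddCommGroup M] [Module (LaurentPolynomial ℤ) M]
    (P : Submodule (LaurentPolynomial ℤ) M)
    (h : (Nonempty (P ≃ₗ[LaurentPolynomial ℤ] (R ⧸ (Ideal.span {2 * tL - 1} : Ideal R))) ∧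
            Nonempty ((M ⧸ P) ≃ₗ[LaurentPolynomial ℤ] (R ⧸ (Ideal.span {tL - 2} : Ideal R)))) ∨
         (Nonempty (P ≃ₗ[LaurentPolynomial ℤ] (R ⧸ (Ideal.span {tL - 2} : Ideal R))) ∧
            Nonempty ((M ⧸ P) ≃ₗ[LaurentPolynomial ℤ] (R ⧸ (Ideal.span {2 * tL - 1} : Ideal R))))) :
    Nonempty (M ≃ₗ[LaurentPolynomial ℤ]
        ((R ⧸ (Ideal.span {tL - 2} : Ideal R)) × (R ⧸ (Ideal.span {2 * tL - 1} : Ideal R)))) ∨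
    Nonempty (M ≃ₗ[LaurentPolynomial ℤ]
        (R ⧸ (Ideal.span {(tL - 2) * (2 * tL - 1)} : Ideal R))) := by
  rcases h with ⟨⟨e⟩, ⟨f⟩⟩ | ⟨⟨e⟩, ⟨f⟩⟩
  · -- P ≅ R/(2t-1), M/P ≅ R/(t-2)
    have key : ∀ c : R, c ∈ Ideal.span {2 * tL - 1, tL - 2} ∨
        c - 1 ∈ Ideal.span {2 * tL - 1, tL - 2} ∨
        c + 1 ∈ Ideal.span {2 * tL - 1, tL - 2} := by
      intro c
      exact MiddleAux.key_trichotomy _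
        (Ideal.subset_span (by simp)) (Ideal.subset_span (by simp)) c
    rcases MiddleAux.classify (2 * tL - 1) (tL - 2) M P e f key with ⟨⟨g⟩⟩ | ⟨⟨g⟩⟩
    · exact Or.inl ⟨g.trans (LinearEquiv.prodComm _ _ _)⟩
    · rw [mul_comm (2 * tL - 1) (tL - 2)] at g
      exact Or.inr ⟨g⟩
  · -- P ≅ R/(t-2), M/P ≅ R/(2t-1)
    have key : ∀ c : R, c ∈ Ideal.span {tL - 2, 2 * tL - 1} ∨
        c - 1 ∈ Ideal.span {tL - 2, 2 * tL - 1} ∨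
        c + 1 ∈ Ideal.span {tL - 2, 2 * tL - 1} := by
      intro c
      exact MiddleAux.key_trichotomy _
        (Ideal.subset_span (by simp)) (Ideal.subset_span (by simp)) c
    exact (MiddleAux.classify (tL - 2) (2 * tL - 1) M P e f key).imp id id
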